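/- arXiv:2411.14889 — 2 statements merged into one kernel-verified Lean document; each statement's English description precedes it below -/
import Mathlib

section
/- If G is a connected, claw-free, cubic graph, then σ_{(2,3)}(G) ≤ σ_{(2,2)}(G) ≤ σ_{(2,3)}(G) + 1. -/
open SimpleGraph Set

variable {V : Type*}

/-- One step of the (p,q)-spreading color change rule: a white vertex `w` with at least `p`
blue neighbors, at least one of which has at most `q` white neighbors, becomes blue. -/
def spreadStep (G : SimpleGraph V) (p : ℕ) (q : ℕ∞) (B : Set V) : Set V :=
  B ∪ {w | p ≤ (G.neighborSet w ∩ B).ncard ∧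
      ∃ u ∈ G.neighborSet w ∩ B, ((G.neighborSet u \ B).ncard : ℕ∞) ≤ q}

/-- `S` is a (p,q)-spreading set if iterating the rule eventually colors all vertices blue. -/
def IsSpreadingSet (G : SimpleGraph V) (p : ℕ) (q : ℕ∞) (S : Set V) : Prop :=
  ∃ n : ℕ, (spreadStep G p q)^[n] S = Set.univ

/-- The (p,q)-spreading number σ_{(p,q)}(G). -/
noncomputable def spreadNumber (G : SimpleGraph V) (p : ℕ) (q : ℕ∞) : ℕ :=
  sInf {k | ∃ S : Set V, S.ncard = k ∧ IsSpreadingSet G p q S}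

/-- One step of r-neighbor bootstrap percolation. -/
def percStep (G : SimpleGraph V) (r : ℕ) (B : Set V) : Set V :=
  B ∪ {w | r ≤ (G.neighborSet w ∩ B).ncard}

/-- `S` is an r-percolating set of `G`. -/
def IsPercolating (G : SimpleGraph V) (r : ℕ) (S : Set V) : Prop :=
  ∃ n : ℕ, (percStep G r)^[n] S = Set.univ

/-- The r-percolation number m(G,r). -/
noncomputable def percNumber (G : SimpleGraph V) (r : ℕ) : ℕ :=
  sInf {k | ∃ S : Set V, S.ncard = k ∧ IsPercolating G r S}

/-- A vertex cover of `G`. -/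
def IsVertexCover (G : SimpleGraph V) (C : Set V) : Prop :=
  ∀ ⦃u v : V⦄, G.Adj u v → u ∈ C ∨ v ∈ C

/-- The vertex cover number β(G). -/
noncomputable def coverNumber (G : SimpleGraph V) : ℕ :=
  sInf {k | ∃ C : Set V, C.ncard = k ∧ _root_.IsVertexCover G C}

/-- An independent set of `G`. -/
def IsIndep (G : SimpleGraph V) (I : Set V) : Prop :=
  I.Pairwise fun u v => ¬ G.Adj u v

/-- The independence number α(G). -/
noncomputable def indepNumber (G : SimpleGraph V) : ℕ :=
  sSup {k | ∃ I : Set V, I.ncard = k ∧ IsIndep G I}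

/-- `G` has no induced `K_{1,3}`. -/
def ClawFree (G : SimpleGraph V) : Prop :=
  ¬ ∃ v a b c : V, a ≠ b ∧ a ≠ c ∧ b ≠ c ∧
    G.Adj v a ∧ G.Adj v b ∧ G.Adj v c ∧ ¬ G.Adj a b ∧ ¬ G.Adj a c ∧ ¬ G.Adj b c

/-- The set `T` is (the vertex set of) a triangle of `G`. -/
def IsTriangle (G : SimpleGraph V) (T : Set V) : Prop :=
  ∃ a b c : V, a ≠ b ∧ a ≠ c ∧ b ≠ c ∧
    G.Adj a b ∧ G.Adj a c ∧ G.Adj b c ∧ T = {a, b, c}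

/-- The set `D` induces a diamond (`K_4` minus the edge `ab`) in `G`. -/
def IsDiamond (G : SimpleGraph V) (D : Set V) : Prop :=
  ∃ a b c d : V, a ≠ b ∧ a ≠ c ∧ a ≠ d ∧ b ≠ c ∧ b ≠ d ∧ c ≠ d ∧
    ¬ G.Adj a b ∧ G.Adj a c ∧ G.Adj a d ∧ G.Adj b c ∧ G.Adj b d ∧ G.Adj c d ∧
    D = {a, b, c, d}

/-- `P` is a partition of the vertex set of `G` into sets each inducing a triangle
or a diamond (a triangle-diamond partition). -/
def IsTDPartition (G : SimpleGraph V) (P : Set (Set V)) : Prop :=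
  (∀ S ∈ P, IsTriangle G S ∨ IsDiamond G S) ∧ ∀ v : V, ∃! S : Set V, S ∈ P ∧ v ∈ S

/-- The diamond-necklace `N_k`: the vertex `(i, 0)` is `a_i`, `(i, 1)` is `b_i`,
`(i, 2)` is `c_i`, `(i, 3)` is `d_i`; inside each diamond all edges except `a_i b_i`
are present, and consecutive diamonds are linked by the edges `a_i b_{i+1}`. -/
def diamondNecklace (k : ℕ) : SimpleGraph (ZMod k × Fin 4) :=
  SimpleGraph.fromRel (fun x y =>
    (x.1 = y.1 ∧ ¬ (x.2 = 0 ∧ y.2 = 1) ∧ ¬ (x.2 = 1 ∧ y.2 = 0))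
    ∨ (y.1 = x.1 + 1 ∧ x.2 = 0 ∧ y.2 = 1))

/-- The triangle-necklace `F_{2k}`: the vertex `(j, 0)` is `x_{j+1}`, `(j, 1)` is `y_{j+1}`,
`(j, 2)` is `z_{j+1}`; each triple `{x,y,z}` with the same first coordinate is a triangle,
and the triangles are linked by the edges `x_{2i-1}x_{2i}`, `y_{2i-1}y_{2i}` and
`z_{2i}z_{2i+1}` (indices modulo `2k`). -/
def triangleNecklace (k : ℕ) : SimpleGraph (ZMod (2 * k) × Fin 3) :=
  SimpleGraph.fromRel (fun x y =>
    (x.1 = y.1 ∧ x.2 ≠ y.2)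
    ∨ (y.1 = x.1 + 1 ∧ Even x.1.val ∧ ((x.2 = 0 ∧ y.2 = 0) ∨ (x.2 = 1 ∧ y.2 = 1)))
    ∨ (y.1 = x.1 + 1 ∧ Odd x.1.val ∧ x.2 = 2 ∧ y.2 = 2))
section Infra
variable {V : Type*} [Fintype V] (G : SimpleGraph V)

lemma st16_spreadStep_mono {p : ℕ} {q q' : ℕ∞} (hq : q ≤ q') {B B' : Set V} (hB : B ⊆ B') :
    spreadStep G p q B ⊆ spreadStep G p q' B' := by
  intro w hw
  rcases hw with h | h
  · exact Or.inl (hB h)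
  · obtain ⟨hcount, u, hu, hu3⟩ := h
    rw [Set.mem_inter_iff] at hu
    right
    refine ⟨le_trans hcount (Set.ncard_le_ncard (inter_subset_inter_right _ hB)
      (Set.toFinite _)), u, Set.mem_inter hu.1 (hB hu.2), le_trans ?_ (le_trans hu3 hq)⟩
    exact_mod_cast Nat.cast_le.mpr (Set.ncard_le_ncard (diff_subset_diff_right hB) (Set.toFinite _))

lemma st16_subset_spreadStep {p : ℕ} {q : ℕ∞} (B : Set V) : B ⊆ spreadStep G p q B :=
  Set.subset_union_left

lemma st16_iterate_mono {p : ℕ} {q q' : ℕ∞} (hq : q ≤ q') {B B' : Set V} (hB : B ⊆ B') :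
    ∀ n, (spreadStep G p q)^[n] B ⊆ (spreadStep G p q')^[n] B' := by
  intro n
  induction n with
  | zero => simpa using hB
  | succ n ih =>
    rw [Function.iterate_succ_apply', Function.iterate_succ_apply']
    exact st16_spreadStep_mono G hq ih

lemma st16_subset_iterate {p : ℕ} {q : ℕ∞} (B : Set V) :
    ∀ n, B ⊆ (spreadStep G p q)^[n] B := by
  intro n
  induction n with
  | zero => simp
  | succ n ih =>
    rw [Function.iterate_succ_apply']
    exact ih.trans (st16_subset_spreadStep G _)

lemma st16_univ_spreading (p : ℕ) (q : ℕ∞) : IsSpreadingSet G p q (Set.univ : Set V) :=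
  ⟨0, rfl⟩

lemma st16_sets_nonempty (p : ℕ) (q : ℕ∞) :
    {k | ∃ S : Set V, S.ncard = k ∧ IsSpreadingSet G p q S}.Nonempty :=
  ⟨(Set.univ : Set V).ncard, Set.univ, rfl, st16_univ_spreading G p q⟩

lemma st16_part1 : spreadNumber G 2 3 ≤ spreadNumber G 2 2 := by
  obtain ⟨S, hcard, n, hn⟩ := Nat.sInf_mem (st16_sets_nonempty G 2 2)
  apply Nat.sInf_le
  refine ⟨S, hcard, n, ?_⟩
  apply Set.eq_univ_of_univ_subset
  rw [← hn]
  exact st16_iterate_mono G (by norm_num) (subset_refl S) n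

lemma st16_spreadStep_subset_percStep (q : ℕ∞) (B : Set V) :
    spreadStep G 2 q B ⊆ percStep G 2 B := by
  intro w hw
  rcases hw with h | h
  · exact Or.inl h
  · exact Or.inr h.1

lemma st16_spreading_percolates {S : Set V} (h : IsSpreadingSet G 2 3 S) :
    IsPercolating G 2 S := by
  obtain ⟨n, hn⟩ := h
  refine ⟨n, Set.eq_univ_of_univ_subset ?_⟩
  rw [← hn]
  clear hn
  induction n with
  | zero => simp
  | succ n ih =>
    rw [Function.iterate_succ_apply', Function.iterate_succ_apply']
    exact (st16_spreadStep_mono G (le_refl 3) ih).trans (st16_spreadStep_subset_percStep G 3 _)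

end Infra

def IsTriangle' {V : Type*} (G : SimpleGraph V) (T : Set V) : Prop :=
  ∃ a b c : V, a ≠ b ∧ a ≠ c ∧ b ≠ c ∧
    G.Adj a b ∧ G.Adj a c ∧ G.Adj b c ∧ T = {a, b, c}

def IsDiamond' {V : Type*} (G : SimpleGraph V) (D : Set V) : Prop :=
  ∃ a b c d : V, a ≠ b ∧ a ≠ c ∧ a ≠ d ∧ b ≠ c ∧ b ≠ d ∧ c ≠ d ∧
    ¬ G.Adj a b ∧ G.Adj a c ∧ G.Adj a d ∧ G.Adj b c ∧ G.Adj b d ∧ G.Adj c d ∧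
    D = {a, b, c, d}

set_option linter.unusedSectionVars false

section Infra2
variable {V : Type*} [Fintype V] {G : SimpleGraph V}

lemma st16_exists_fix (p : ℕ) (q : ℕ∞) (T : Set V) :
    ∃ N : ℕ, spreadStep G p q ((spreadStep G p q)^[N] T) = (spreadStep G p q)^[N] T := by
  by_contra h
  push_neg at h
  have hstrict : ∀ n, ((spreadStep G p q)^[n] T).ncard < ((spreadStep G p q)^[n + 1] T).ncard := by
    intro n
    rw [Function.iterate_succ_apply']
    exact Set.ncard_lt_ncard
      (ssubset_of_subset_of_ne (st16_subset_spreadStep G _) (Ne.symm (h n))) (Set.toFinite _)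
  have hgrow : ∀ n, n ≤ ((spreadStep G p q)^[n] T).ncard := by
    intro n
    induction n with
    | zero => simp
    | succ n ih => exact Nat.succ_le_of_lt (lt_of_le_of_lt ih (hstrict n))
  have h1 := hgrow (Fintype.card V + 1)
  have h2 : ((spreadStep G p q)^[Fintype.card V + 1] T).ncard ≤ Fintype.card V := by
    have := Set.ncard_le_ncard (Set.subset_univ ((spreadStep G p q)^[Fintype.card V + 1] T))
      (Set.toFinite _)
    simpa [Set.ncard_univ] using this
  omega

lemma st16_step (hcub : ∀ v : V, (G.neighborSet v).ncard = 3) {B : Set V}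
    (hB : spreadStep G 2 2 B = B) {w x y z : V}
    (hx : G.Adj w x) (hy : G.Adj w y) (hxy : x ≠ y) (hxB : x ∈ B) (hyB : y ∈ B)
    (hz : G.Adj x z) (hzB : z ∈ B) : w ∈ B := by
  rw [← hB]
  right
  constructor
  · have hsub : ({x, y} : Set V) ⊆ G.neighborSet w ∩ B := by
      intro t ht
      rcases ht with rfl | rfl
      · exact ⟨hx, hxB⟩
      · exact ⟨hy, hyB⟩
    calc (2 : ℕ) = ({x, y} : Set V).ncard := (Set.ncard_pair hxy).symm
      _ ≤ _ := Set.ncard_le_ncard hsub (Set.toFinite _)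
  · refine ⟨x, Set.mem_inter hx hxB, ?_⟩
    have hsub : G.neighborSet x \ B ⊆ G.neighborSet x \ {z} :=
      diff_subset_diff_right (by simpa using hzB)
    have h1 : (G.neighborSet x \ {z}).ncard = 2 := by
      rw [Set.ncard_diff_singleton_of_mem (show z ∈ G.neighborSet x from hz), hcub x]
    have h2 : (G.neighborSet x \ B).ncard ≤ 2 := h1 ▸ Set.ncard_le_ncard hsub (Set.toFinite _)
    exact_mod_cast Nat.cast_le.mpr h2

lemma st16_unit_seed (hcub : ∀ v : V, (G.neighborSet v).ncard = 3) {U : Set V}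
    (hU : ∀ w ∈ U, 2 ≤ (G.neighborSet w ∩ U).ncard) (hUne : U.Nonempty)
    {S : Set V} (hS : IsPercolating G 2 S) : (S ∩ U).Nonempty := by
  by_contra h
  rw [Set.not_nonempty_iff_eq_empty] at h
  obtain ⟨n, hn⟩ := hS
  have key : ∀ m, (percStep G 2)^[m] S ∩ U = ∅ := by
    intro m
    induction m with
    | zero => simpa using h
    | succ m ih =>
      rw [Function.iterate_succ_apply']
      apply Set.eq_empty_iff_forall_notMem.mpr
      rintro x ⟨hx, hxU⟩
      rcases hx with hx | hx
      · exact (Set.eq_empty_iff_forall_notMem.mp ih x) ⟨hx, hxU⟩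
      · have hdisj : G.neighborSet x ∩ (percStep G 2)^[m] S ⊆ G.neighborSet x \ U := by
          rintro y ⟨hy1, hy2⟩
          exact ⟨hy1, fun hyU => (Set.eq_empty_iff_forall_notMem.mp ih y) ⟨hy2, hyU⟩⟩
        have hcd := Set.ncard_inter_add_ncard_diff_eq_ncard (G.neighborSet x) U (Set.toFinite _)
        have h2 := hU x hxU
        have h3 := hcub x
        have h4 := Set.ncard_le_ncard hdisj (Set.toFinite _)
        have h5 : 2 ≤ (G.neighborSet x ∩ (percStep G 2)^[m] S).ncard := hx
        omega
  obtain ⟨v, hv⟩ := hUne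
  have hk := key n
  rw [hn] at hk
  exact (Set.eq_empty_iff_forall_notMem.mp hk v) ⟨trivial, hv⟩

lemma st16_walk_closed {K : Set V} (hcl : ∀ x ∈ K, ∀ y, G.Adj x y → y ∈ K) :
    ∀ {a b : V} (_ : G.Walk a b), a ∈ K → b ∈ K := by
  intro a b p
  induction p with
  | nil => exact id
  | cons h q ih => exact fun ha => ih (hcl _ ha _ h)

lemma st16_nbrs (hcub : ∀ v : V, (G.neighborSet v).ncard = 3) (v : V) :
    ∃ a b c : V, a ≠ b ∧ a ≠ c ∧ b ≠ c ∧ G.neighborSet v = {a, b, c} :=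
  Set.ncard_eq_three.mp (hcub v)

lemma st16_cf_pair (hcf : ClawFree G) {v a b c : V} (hab : a ≠ b) (hac : a ≠ c) (hbc : b ≠ c)
    (ha : G.Adj v a) (hb : G.Adj v b) (hc : G.Adj v c) :
    G.Adj a b ∨ G.Adj a c ∨ G.Adj b c := by
  by_contra h
  push_neg at h
  exact hcf ⟨v, a, b, c, hab, hac, hbc, ha, hb, hc, h.1, h.2.1, h.2.2⟩

end Infra2

section Struct
variable {V : Type*} [Fintype V] {G : SimpleGraph V}

lemma st16_nbr_eq (hcub : ∀ v : V, (G.neighborSet v).ncard = 3) {v a b c : V}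
    (hab : a ≠ b) (hac : a ≠ c) (hbc : b ≠ c)
    (ha : G.Adj v a) (hb : G.Adj v b) (hc : G.Adj v c) :
    G.neighborSet v = {a, b, c} := by
  have hsub : ({a, b, c} : Set V) ⊆ G.neighborSet v := by
    intro x hx
    rcases hx with rfl | rfl | rfl
    · exact ha
    · exact hb
    · exact hc
  have h1 : ({a, b, c} : Set V).ncard = 3 := Set.ncard_eq_three.mpr ⟨a, b, c, hab, hac, hbc, rfl⟩
  exact (Set.eq_of_subset_of_ncard_le hsub (by rw [hcub v, h1]) (Set.toFinite _)).symm

lemma st16_third (hcub : ∀ v : V, (G.neighborSet v).ncard = 3) {v a b : V}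
    (hab : a ≠ b) (ha : G.Adj v a) (hb : G.Adj v b) :
    ∃ e : V, e ≠ a ∧ e ≠ b ∧ G.neighborSet v = {a, b, e} := by
  have hsub : ({a, b} : Set V) ⊆ G.neighborSet v := by
    intro x hx
    rcases hx with rfl | rfl
    · exact ha
    · exact hb
  have hd : (G.neighborSet v \ {a, b}).ncard = 1 := by
    rw [Set.ncard_diff hsub (Set.toFinite _), Set.ncard_pair hab, hcub v]
  obtain ⟨e, he⟩ := Set.ncard_eq_one.mp hd
  have heD : e ∈ G.neighborSet v \ {a, b} := he ▸ rfl
  refine ⟨e, ?_, ?_, ?_⟩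
  · intro h; exact heD.2 (by simp [h])
  · intro h; exact heD.2 (by simp [h])
  · ext x
    constructor
    · intro hx
      by_cases hxa : x = a
      · simp [hxa]
      by_cases hxb : x = b
      · simp [hxb]
      have : x ∈ G.neighborSet v \ {a, b} := ⟨hx, by simp [hxa, hxb]⟩
      rw [he] at this
      simp_all
    · intro hx
      rcases hx with rfl | rfl | rfl
      · exact ha
      · exact hb
      · exact heD.1

end Struct

section Struct2
variable {V : Type*} [Fintype V] {G : SimpleGraph V}

def st16_TwoPairs (G : SimpleGraph V) (v : V) : Prop :=
  ∃ p q r : V, G.Adj v p ∧ G.Adj v q ∧ G.Adj v r ∧ p ≠ q ∧ G.Adj p r ∧ G.Adj q r ∧ ¬ G.Adj p q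

def st16_UniqPair (G : SimpleGraph V) (v c d : V) : Prop :=
  ∀ x y : V, G.Adj v x → G.Adj v y → G.Adj x y → (x = c ∧ y = d) ∨ (x = d ∧ y = c)

def st16_DChar (G : SimpleGraph V) (v : V) (D : Set V) : Prop :=
  (st16_TwoPairs G v ∧ D = insert v (G.neighborSet v)) ∨
  (∃ c d b : V, G.Adj v c ∧ G.Adj v d ∧ G.Adj c d ∧ st16_UniqPair G v c d ∧
     G.neighborSet c \ {v, d} = {b} ∧ G.neighborSet d \ {v, c} = {b} ∧ D = {v, c, d, b})

lemma st16_char_center (hcub : ∀ v : V, (G.neighborSet v).ncard = 3) {a b c d : V}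
    (nab : a ≠ b) (nad : a ≠ d) (nbd : b ≠ d)
    (hnab : ¬ G.Adj a b) (aac : G.Adj a c) (aad : G.Adj a d) (abc : G.Adj b c)
    (abd : G.Adj b d) (acd : G.Adj c d) :
    st16_DChar G c {a, b, c, d} := by
  left
  constructor
  · exact ⟨a, b, d, aac.symm, abc.symm, acd, nab, aad, abd, hnab⟩
  · rw [st16_nbr_eq hcub nab nad nbd aac.symm abc.symm acd]
    ext x; simp; tauto

lemma st16_char_tip (hcub : ∀ v : V, (G.neighborSet v).ncard = 3) {a b c d : V}
    (nab : a ≠ b) (ncd : c ≠ d) (nbc : b ≠ c) (nbd : b ≠ d)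
    (hnab : ¬ G.Adj a b) (aac : G.Adj a c) (aad : G.Adj a d) (abc : G.Adj b c)
    (abd : G.Adj b d) (acd : G.Adj c d) :
    st16_DChar G a {a, b, c, d} := by
  have hNc : G.neighborSet c = {a, b, d} :=
    st16_nbr_eq hcub nab (fun h => G.irrefl (h ▸ aad)) nbd aac.symm abc.symm acd
  have hNd : G.neighborSet d = {a, b, c} :=
    st16_nbr_eq hcub nab (fun h => G.irrefl (h ▸ aac)) nbc aad.symm abd.symm acd.symm
  obtain ⟨e, hec, hed, hNa⟩ := st16_third hcub ncd aac aad
  have heN : G.Adj a e := by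
    have he : e ∈ G.neighborSet a := by rw [hNa]; simp
    exact he
  have hea : e ≠ a := fun h => G.irrefl (h ▸ heN)
  have heb : e ≠ b := fun h => hnab (h ▸ heN)
  have hnce : ¬ G.Adj c e := by
    intro h
    have he : e ∈ G.neighborSet c := h
    rw [hNc] at he
    rcases he with h' | h' | h' <;> [exact hea h'; exact heb h'; exact hed h']
  have hnde : ¬ G.Adj d e := by
    intro h
    have he : e ∈ G.neighborSet d := h
    rw [hNd] at he
    rcases he with h' | h' | h' <;> [exact hea h'; exact heb h'; exact hec h']
  right
  refine ⟨c, d, b, aac, aad, acd, ?_, ?_, ?_, ?_⟩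
  · intro x y hx hy hxy
    have hx' : x ∈ G.neighborSet a := hx
    have hy' : y ∈ G.neighborSet a := hy
    rw [hNa] at hx' hy'
    rcases hx' with rfl | rfl | rfl <;> rcases hy' with rfl | rfl | rfl
    · exact absurd rfl hxy.ne
    · exact Or.inl ⟨rfl, rfl⟩
    · exact absurd hxy hnce
    · exact Or.inr ⟨rfl, rfl⟩
    · exact absurd rfl hxy.ne
    · exact absurd hxy hnde
    · exact absurd hxy.symm hnce
    · exact absurd hxy.symm hnde
    · exact absurd rfl hxy.ne
  · rw [hNc]; ext x
    simp only [Set.mem_diff, Set.mem_insert_iff, Set.mem_singleton_iff]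
    constructor
    · rintro ⟨rfl | rfl | rfl, h2⟩ <;> tauto
    · rintro rfl; exact ⟨Or.inr (Or.inl rfl), by tauto⟩
  · rw [hNd]; ext x
    simp only [Set.mem_diff, Set.mem_insert_iff, Set.mem_singleton_iff]
    constructor
    · rintro ⟨rfl | rfl | rfl, h2⟩ <;> tauto
    · rintro rfl; exact ⟨Or.inr (Or.inl rfl), by tauto⟩
  · ext x; simp; tauto

lemma st16_diamond_char (hcub : ∀ v : V, (G.neighborSet v).ncard = 3) {D : Set V} {v : V}
    (hD : IsDiamond' G D) (hv : v ∈ D) : st16_DChar G v D := by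
  obtain ⟨a, b, c, d, nab, nac, nad, nbc, nbd, ncd, hnab, aac, aad, abc, abd, acd, rfl⟩ := hD
  rcases hv with rfl | rfl | rfl | rfl
  · exact st16_char_tip hcub nab ncd nbc nbd hnab aac aad abc abd acd
  · have h : ({v, a, c, d} : Set V) = {a, v, c, d} := by ext x; simp; tauto
    rw [← h]
    exact st16_char_tip hcub (Ne.symm nab) ncd nac nad (fun h' => hnab h'.symm) abc abd aac aad acd
  · exact st16_char_center hcub nab nad nbd hnab aac aad abc abd acd
  · have h : ({a, b, v, c} : Set V) = {a, b, c, v} := by ext x; simp; tauto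
    rw [← h]
    exact st16_char_center hcub nab nac nbc hnab aad aac abd abc acd.symm

lemma st16_diamond_unique (hcub : ∀ v : V, (G.neighborSet v).ncard = 3) {D D' : Set V} {v : V}
    (hD : IsDiamond' G D) (hD' : IsDiamond' G D') (hv : v ∈ D) (hv' : v ∈ D') : D = D' := by
  have h1 := st16_diamond_char hcub hD hv
  have h2 := st16_diamond_char hcub hD' hv'
  rcases h1 with ⟨htp, rfl⟩ | ⟨c, d, b, hvc, hvd, hcd, huniq, hNc, hNd, rfl⟩
  · rcases h2 with ⟨_, rfl⟩ | ⟨c, d, b, hvc, hvd, hcd, huniq, hNc, hNd, rfl⟩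
    · rfl
    · exfalso
      obtain ⟨p, q, r, hp, hq, hr, hpq, hpr, hqr, hnpq⟩ := htp
      rcases huniq p r hp hr hpr with ⟨hp1, hp2⟩ | ⟨hp1, hp2⟩ <;>
        rcases huniq q r hq hr hqr with ⟨hq1, hq2⟩ | ⟨hq1, hq2⟩
      · exact hpq (hp1.trans hq1.symm)
      · exact hcd.ne (hq2.symm.trans hp2)
      · exact hcd.ne (hp2.symm.trans hq2)
      · exact hpq (hp1.trans hq1.symm)
  · rcases h2 with ⟨htp, rfl⟩ | ⟨c', d', b', hvc', hvd', hcd', huniq', hNc', hNd', rfl⟩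
    · exfalso
      obtain ⟨p, q, r, hp, hq, hr, hpq, hpr, hqr, hnpq⟩ := htp
      rcases huniq p r hp hr hpr with ⟨hp1, hp2⟩ | ⟨hp1, hp2⟩ <;>
        rcases huniq q r hq hr hqr with ⟨hq1, hq2⟩ | ⟨hq1, hq2⟩
      · exact hpq (hp1.trans hq1.symm)
      · exact hcd.ne (hq2.symm.trans hp2)
      · exact hcd.ne (hp2.symm.trans hq2)
      · exact hpq (hp1.trans hq1.symm)
    · rcases huniq c' d' hvc' hvd' hcd' with ⟨rfl, rfl⟩ | ⟨rfl, rfl⟩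
      · have hb : b' = b := by
          have h := hNc'.symm.trans hNc
          simpa using h
        rw [hb]
      · have hb : b' = b := by
          have h := hNc'.symm.trans hNd
          simpa using h
        rw [hb]
        ext x; simp; tauto

end Struct2

section Struct3
variable {V : Type*} [Fintype V] {G : SimpleGraph V}

def st16_AllAdj (G : SimpleGraph V) (v : V) : Prop :=
  ∀ x y : V, G.Adj v x → G.Adj v y → x ≠ y → G.Adj x y

lemma st16_exists_triangle (hcub : ∀ v : V, (G.neighborSet v).ncard = 3) (hcf : ClawFree G)
    (v : V) : ∃ T : Set V, IsTriangle' G T ∧ v ∈ T := by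
  obtain ⟨a, b, c, hab, hac, hbc, hN⟩ := st16_nbrs hcub v
  have ha : G.Adj v a := by rw [← SimpleGraph.mem_neighborSet, hN]; simp
  have hb : G.Adj v b := by rw [← SimpleGraph.mem_neighborSet, hN]; simp
  have hc : G.Adj v c := by rw [← SimpleGraph.mem_neighborSet, hN]; simp
  rcases st16_cf_pair hcf hab hac hbc ha hb hc with h | h | h
  · exact ⟨{v, a, b}, ⟨v, a, b, ha.ne, hb.ne, hab, ha, hb, h, rfl⟩, by simp⟩
  · exact ⟨{v, a, c}, ⟨v, a, c, ha.ne, hc.ne, hac, ha, hc, h, rfl⟩, by simp⟩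
  · exact ⟨{v, b, c}, ⟨v, b, c, hb.ne, hc.ne, hbc, hb, hc, h, rfl⟩, by simp⟩

lemma st16_tri_at {T : Set V} {v : V} (hT : IsTriangle' G T) (hv : v ∈ T) :
    ∃ p q : V, p ≠ q ∧ G.Adj v p ∧ G.Adj v q ∧ G.Adj p q ∧ T = {v, p, q} := by
  obtain ⟨a, b, c, nab, nac, nbc, aab, aac, abc, rfl⟩ := hT
  rcases hv with rfl | rfl | rfl
  · exact ⟨b, c, nbc, aab, aac, abc, rfl⟩
  · exact ⟨a, c, fun h => nac (h ▸ rfl), aab.symm, abc, aac, by ext x; simp; tauto⟩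
  · exact ⟨a, b, nab, aac.symm, abc.symm, aab, by ext x; simp; tauto⟩

lemma st16_triangle_unique (hcub : ∀ v : V, (G.neighborSet v).ncard = 3)
    (hK4 : ∀ u : V, ¬ st16_AllAdj G u) {v : V}
    (hnd : ¬ ∃ D : Set V, IsDiamond' G D ∧ v ∈ D) {T T' : Set V}
    (hT : IsTriangle' G T) (hv : v ∈ T) (hT' : IsTriangle' G T') (hv' : v ∈ T') : T = T' := by
  obtain ⟨p, q, npq, avp, avq, apq, rfl⟩ := st16_tri_at hT hv
  obtain ⟨p', q', npq', avp', avq', apq', rfl⟩ := st16_tri_at hT' hv'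
  obtain ⟨e, hep, heq, hN⟩ := st16_third hcub npq avp avq
  have hae : G.Adj v e := by
    have he : e ∈ G.neighborSet v := by rw [hN]; simp
    exact he
  have hboth : G.Adj p e → G.Adj q e → False := by
    intro hpe hqe
    apply hK4 v
    intro x y hx hy hxy
    have hx' : x ∈ ({p, q, e} : Set V) := by rw [← hN]; exact hx
    have hy' : y ∈ ({p, q, e} : Set V) := by rw [← hN]; exact hy
    rcases hx' with rfl | rfl | rfl <;> rcases hy' with rfl | rfl | rfl <;>
      first
        | exact absurd rfl hxy
        | exact apq | exact apq.symm | exact hpe | exact hpe.symm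
        | exact hqe | exact hqe.symm
  have case_pe : G.Adj p e → False := by
    intro hpe
    by_cases hqe : G.Adj q e
    · exact hboth hpe hqe
    · apply hnd
      refine ⟨{q, e, v, p}, ⟨q, e, v, p, Ne.symm heq, avq.ne', npq.symm, hae.ne', hep, avp.ne,
        hqe, avq.symm, apq.symm, hae.symm, hpe.symm, avp, rfl⟩, by simp⟩
  have case_qe : G.Adj q e → False := by
    intro hqe
    by_cases hpe : G.Adj p e
    · exact hboth hpe hqe
    · apply hnd
      refine ⟨{p, e, v, q}, ⟨p, e, v, q, Ne.symm hep, avp.ne', npq, hae.ne', heq, avq.ne,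
        hpe, avp.symm, apq, hae.symm, hqe.symm, avq, rfl⟩, by simp⟩
  have hp' : p' ∈ ({p, q, e} : Set V) := by rw [← hN]; exact avp'
  have hq' : q' ∈ ({p, q, e} : Set V) := by rw [← hN]; exact avq'
  rcases hp' with rfl | rfl | rfl <;> rcases hq' with rfl | rfl | rfl
  · exact absurd rfl apq'.ne
  · rfl
  · exact absurd (case_pe apq') not_false
  · ext x; simp; tauto
  · exact absurd rfl apq'.ne
  · exact absurd (case_qe apq') not_false
  · exact absurd (case_pe apq'.symm) not_false
  · exact absurd (case_qe apq'.symm) not_false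
  · exact absurd rfl apq'.ne

lemma st16_tri_mate_nodiamond (hcub : ∀ v : V, (G.neighborSet v).ncard = 3) {v : V}
    (hnd : ¬ ∃ D : Set V, IsDiamond' G D ∧ v ∈ D) {T : Set V}
    (hT : IsTriangle' G T) (hv : v ∈ T) :
    ∀ u ∈ T, ¬ ∃ D : Set V, IsDiamond' G D ∧ u ∈ D := by
  obtain ⟨p, q, npq, avp, avq, apq, rfl⟩ := st16_tri_at hT hv
  have main : ∀ s t : V, G.Adj v s → G.Adj v t → G.Adj s t →
      ¬ ∃ D : Set V, IsDiamond' G D ∧ s ∈ D := by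
    rintro s t hvs hvt hst ⟨D, hD, hsD⟩
    rcases st16_diamond_char hcub hD hsD with ⟨_, rfl⟩ | ⟨c, d, b, hsc, hsd, hcd, huniq, _, _, rfl⟩
    · exact hnd ⟨_, hD, Set.mem_insert_iff.mpr (Or.inr hvs.symm)⟩
    · rcases huniq v t hvs.symm hst hvt with h | h
      · exact hnd ⟨_, hD, by rw [h.1]; simp⟩
      · exact hnd ⟨_, hD, by rw [h.1]; simp⟩
  intro u hu
  rcases hu with rfl | rfl | rfl
  · exact hnd
  · exact main u q avp avq apq
  · exact main u p avq avp apq.symm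

end Struct3

section Units
variable {V : Type*} [Fintype V] {G : SimpleGraph V}

open Classical in
noncomputable def st16_unitOf (G : SimpleGraph V) (v : V) : Set V :=
  if h : ∃ D : Set V, IsDiamond' G D ∧ v ∈ D then h.choose
  else if h2 : ∃ T : Set V, IsTriangle' G T ∧ v ∈ T then h2.choose else {v}

lemma st16_unitOf_mem (hcub : ∀ v : V, (G.neighborSet v).ncard = 3) (hcf : ClawFree G) (v : V) :
    v ∈ st16_unitOf G v := by
  unfold st16_unitOf
  split_ifs with h h2
  · exact h.choose_spec.2
  · exact h2.choose_spec.2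
  · exact absurd (st16_exists_triangle hcub hcf v) h2

lemma st16_unitOf_cases (hcub : ∀ v : V, (G.neighborSet v).ncard = 3) (hcf : ClawFree G) (v : V) :
    IsDiamond' G (st16_unitOf G v) ∨ IsTriangle' G (st16_unitOf G v) := by
  unfold st16_unitOf
  split_ifs with h h2
  · exact Or.inl h.choose_spec.1
  · exact Or.inr h2.choose_spec.1
  · exact absurd (st16_exists_triangle hcub hcf v) h2

lemma st16_unitOf_eq (hcub : ∀ v : V, (G.neighborSet v).ncard = 3) (hcf : ClawFree G)
    (hK4 : ∀ u : V, ¬ st16_AllAdj G u) {v u : V} (hu : u ∈ st16_unitOf G v) :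
    st16_unitOf G u = st16_unitOf G v := by
  unfold st16_unitOf at hu ⊢
  by_cases h : ∃ D : Set V, IsDiamond' G D ∧ v ∈ D
  · rw [dif_pos h] at hu
    have hu' : ∃ D : Set V, IsDiamond' G D ∧ u ∈ D := ⟨h.choose, h.choose_spec.1, hu⟩
    rw [dif_pos hu', dif_pos h]
    exact st16_diamond_unique hcub hu'.choose_spec.1 h.choose_spec.1 hu'.choose_spec.2 hu
  · rw [dif_neg h] at hu
    obtain ⟨T0, hT0⟩ := st16_exists_triangle hcub hcf v
    have h2 : ∃ T : Set V, IsTriangle' G T ∧ v ∈ T := ⟨T0, hT0⟩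
    rw [dif_pos h2] at hu
    have hTv := h2.choose_spec
    have hund : ¬ ∃ D : Set V, IsDiamond' G D ∧ u ∈ D :=
      st16_tri_mate_nodiamond hcub h hTv.1 hTv.2 u hu
    have h3 : ∃ T : Set V, IsTriangle' G T ∧ u ∈ T := ⟨h2.choose, hTv.1, hu⟩
    rw [dif_neg hund, dif_pos h3, dif_neg h, dif_pos h2]
    exact st16_triangle_unique hcub hK4 hund h3.choose_spec.1 h3.choose_spec.2 hTv.1 hu

lemma st16_tri_deg {T : Set V} (hT : IsTriangle' G T) :
    ∀ w ∈ T, 2 ≤ (G.neighborSet w ∩ T).ncard := by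
  intro w hw
  obtain ⟨p, q, npq, awp, awq, apq, hTe⟩ := st16_tri_at hT hw
  have hsub : ({p, q} : Set V) ⊆ G.neighborSet w ∩ T := by
    intro x hx
    rcases hx with rfl | rfl
    · exact ⟨awp, by rw [hTe]; simp⟩
    · exact ⟨awq, by rw [hTe]; simp⟩
  calc (2 : ℕ) = ({p, q} : Set V).ncard := (Set.ncard_pair npq).symm
    _ ≤ _ := Set.ncard_le_ncard hsub (Set.toFinite _)

lemma st16_dia_deg {D : Set V} (hD : IsDiamond' G D) :
    ∀ w ∈ D, 2 ≤ (G.neighborSet w ∩ D).ncard := by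
  intro w hw
  obtain ⟨a, b, c, d, nab, nac, nad, nbc, nbd, ncd, hnab, aac, aad, abc, abd, acd, rfl⟩ := hD
  have key : ∀ x y : V, x ≠ y → G.Adj w x → G.Adj w y → x ∈ ({a, b, c, d} : Set V) →
      y ∈ ({a, b, c, d} : Set V) → 2 ≤ (G.neighborSet w ∩ {a, b, c, d}).ncard := by
    intro x y hxy hx hy hxm hym
    have hsub : ({x, y} : Set V) ⊆ G.neighborSet w ∩ {a, b, c, d} := by
      intro z hz
      rcases hz with rfl | rfl
      · exact ⟨hx, hxm⟩
      · exact ⟨hy, hym⟩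
    calc (2 : ℕ) = ({x, y} : Set V).ncard := (Set.ncard_pair hxy).symm
      _ ≤ _ := Set.ncard_le_ncard hsub (Set.toFinite _)
  rcases hw with rfl | rfl | rfl | rfl
  · exact key c d ncd aac aad (by simp) (by simp)
  · exact key c d ncd abc abd (by simp) (by simp)
  · exact key a d nad aac.symm acd (by simp) (by simp)
  · exact key a c nac aad.symm acd.symm (by simp) (by simp)

lemma st16_unitOf_deg (hcub : ∀ v : V, (G.neighborSet v).ncard = 3) (hcf : ClawFree G) (v : V) :
    ∀ w ∈ st16_unitOf G v, 2 ≤ (G.neighborSet w ∩ st16_unitOf G v).ncard := by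
  rcases st16_unitOf_cases hcub hcf v with h | h
  · exact st16_dia_deg h
  · exact st16_tri_deg h

end Units

section Cascade
variable {V : Type*} [Fintype V] {G : SimpleGraph V}

lemma st16_exists_seedpair (hcub : ∀ v : V, (G.neighborSet v).ncard = 3) {U : Set V}
    (hU : IsDiamond' G U ∨ IsTriangle' G U) {e : V} (he : e ∈ U) :
    ∃ s x : V, s ∈ U ∧ x ∈ U ∧ s ≠ x ∧
      (∀ B : Set V, spreadStep G 2 2 B = B → s ∈ B → ∀ ℓ : V, ℓ ∈ B → ℓ ∉ U → G.Adj ℓ e →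
        (∃ z : V, G.Adj ℓ z ∧ z ∈ B) → U ⊆ B) ∧
      (∀ B : Set V, spreadStep G 2 2 B = B → s ∈ B → x ∈ B → U ⊆ B) := by
  rcases hU with hD | hT
  · obtain ⟨a, b, c, d, nab, nac, nad, nbc, nbd, ncd, hnab, aac, aad, abc, abd, acd, hUe⟩ := hD
    have hNc : G.neighborSet c = {a, b, d} :=
      st16_nbr_eq hcub nab (fun h => G.irrefl (h ▸ aad)) nbd aac.symm abc.symm acd
    have hNd : G.neighborSet d = {a, b, c} :=
      st16_nbr_eq hcub nab (fun h => G.irrefl (h ▸ aac)) nbc aad.symm abd.symm acd.symm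
    refine ⟨c, d, by rw [hUe]; simp, by rw [hUe]; simp, ncd, ?_, ?_⟩
    · intro B hB hsB ℓ hlB hlU hle hlz
      -- e is a tip
      have hce : e ≠ c := by
        rintro rfl
        have : ℓ ∈ G.neighborSet e := hle.symm
        rw [hNc] at this
        rcases this with rfl | rfl | rfl <;> exact hlU (by rw [hUe]; simp)
      have hde : e ≠ d := by
        rintro rfl
        have : ℓ ∈ G.neighborSet e := hle.symm
        rw [hNd] at this
        rcases this with rfl | rfl | rfl <;> exact hlU (by rw [hUe]; simp)
      have hlc : ℓ ≠ c := fun h => hlU (h ▸ (by rw [hUe]; simp : c ∈ U))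
      have hld : ℓ ≠ d := fun h => hlU (h ▸ (by rw [hUe]; simp : d ∈ U))
      obtain ⟨z, hz, hzB⟩ := hlz
      have he' : e ∈ U := he
      rw [hUe] at he'
      rcases he' with rfl | rfl | rfl | rfl
      · -- e = a
        have haB : e ∈ B := st16_step hcub hB hle.symm aac hlc hlB hsB hz hzB
        have hdB : d ∈ B := st16_step hcub hB aad.symm acd.symm (Ne.symm aac.ne') haB hsB hle.symm hlB
        have hbB : b ∈ B := st16_step hcub hB abc abd ncd hsB hdB acd hdB
        intro x hx
        rw [hUe] at hx
        rcases hx with rfl | rfl | rfl | rfl <;> assumption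
      · -- e = b
        have hbB : e ∈ B := st16_step hcub hB hle.symm abc hlc hlB hsB hz hzB
        have hdB : d ∈ B := st16_step hcub hB abd.symm acd.symm abc.ne hbB hsB hle.symm hlB
        have haB : a ∈ B := st16_step hcub hB aac aad ncd hsB hdB acd hdB
        intro x hx
        rw [hUe] at hx
        rcases hx with rfl | rfl | rfl | rfl <;> assumption
      · exact absurd rfl hce
      · exact absurd rfl hde
    · intro B hB hsB hxB
      have haB : a ∈ B := st16_step hcub hB aac aad ncd hsB hxB acd hxB
      have hbB : b ∈ B := st16_step hcub hB abc abd ncd hsB hxB acd hxB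
      intro x hx
      rw [hUe] at hx
      rcases hx with rfl | rfl | rfl | rfl <;> assumption
  · obtain ⟨p, q, npq, aep, aeq, apq, hUe⟩ := st16_tri_at hT he
    refine ⟨p, q, by rw [hUe]; simp, by rw [hUe]; simp, npq, ?_, ?_⟩
    · intro B hB hsB ℓ hlB hlU hle hlz
      obtain ⟨z, hz, hzB⟩ := hlz
      have hlp : ℓ ≠ p := fun h => hlU (h ▸ (by rw [hUe]; simp : p ∈ U))
      have heB : e ∈ B := st16_step hcub hB hle.symm aep hlp hlB hsB hz hzB
      have hqB : q ∈ B := st16_step hcub hB apq.symm aeq.symm aep.ne' hsB heB aep.symm heB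
      intro x hx
      rw [hUe] at hx
      rcases hx with rfl | rfl | rfl <;> assumption
    · intro B hB hsB hxB
      have heB : e ∈ B := st16_step hcub hB aep aeq npq hsB hxB apq hxB
      intro x hx
      rw [hUe] at hx
      rcases hx with rfl | rfl | rfl <;> assumption

end Cascade

section Main
variable {V : Type*} [Fintype V] {G : SimpleGraph V}

lemma st16_unit_nonempty {U : Set V} (hU : IsDiamond' G U ∨ IsTriangle' G U) : U.Nonempty := by
  rcases hU with ⟨a, b, c, d, h⟩ | ⟨a, b, c, h⟩
  · obtain ⟨_, _, _, _, _, _, _, _, _, _, _, _, rfl⟩ := h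
    exact ⟨a, by simp⟩
  · obtain ⟨_, _, _, _, _, _, rfl⟩ := h
    exact ⟨a, by simp⟩

lemma st16_pred (hconn : G.Connected) (v₀ : V) {u : V} {n : ℕ} (h : G.dist v₀ u = n + 1) :
    ∃ ℓ : V, G.Adj ℓ u ∧ G.dist v₀ ℓ = n := by
  have hne : u ≠ v₀ := by
    rintro rfl
    rw [SimpleGraph.dist_comm, SimpleGraph.dist_self] at h
    omega
  obtain ⟨p, hp⟩ := hconn.exists_walk_length_eq_dist v₀ u
  obtain ⟨w, hadj, q, hpq⟩ := SimpleGraph.Walk.exists_eq_cons_of_ne hne p.reverse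
  have hlen : q.length = n := by
    have h1 : p.reverse.length = n + 1 := by rw [SimpleGraph.Walk.length_reverse, hp, h]
    rw [hpq] at h1
    simpa using h1
  have hd1 : G.dist v₀ w ≤ n := by
    have := SimpleGraph.dist_le q.reverse
    rwa [SimpleGraph.Walk.length_reverse, hlen] at this
  have hd2 : G.dist w u ≤ 1 := by
    have := SimpleGraph.dist_le (SimpleGraph.Walk.cons hadj.symm SimpleGraph.Walk.nil)
    simpa using this
  have hd3 : G.dist v₀ u ≤ G.dist v₀ w + G.dist w u := hconn.dist_triangle
  exact ⟨w, hadj.symm, by omega⟩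

lemma st16_main_nonK4 (hconn : G.Connected) (hcf : ClawFree G)
    (hcub : ∀ v : V, (G.neighborSet v).ncard = 3) (hK4 : ∀ u : V, ¬ st16_AllAdj G u)
    {S : Set V} (hperc : IsPercolating G 2 S) :
    ∃ T : Set V, IsSpreadingSet G 2 2 T ∧ T.ncard ≤ S.ncard + 1 := by
  haveI hne : Nonempty V := hconn.nonempty
  have v₀ : V := Classical.arbitrary V
  have hentex : ∀ U : Set V, U.Nonempty → ∃ e, e ∈ U ∧ ∀ u ∈ U, G.dist v₀ e ≤ G.dist v₀ u := by
    intro U hU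
    obtain ⟨e, he, hmin⟩ := Set.exists_min_image U (G.dist v₀) (Set.toFinite U) hU
    exact ⟨e, he, hmin⟩
  choose! ent hent1 hent2 using hentex
  have hseedex : ∀ U : Set V, (IsDiamond' G U ∨ IsTriangle' G U) →
      ∃ s x : V, s ∈ U ∧ x ∈ U ∧ s ≠ x ∧
        (∀ B : Set V, spreadStep G 2 2 B = B → s ∈ B → ∀ ℓ : V, ℓ ∈ B → ℓ ∉ U →
          G.Adj ℓ (ent U) → (∃ z : V, G.Adj ℓ z ∧ z ∈ B) → U ⊆ B) ∧
        (∀ B : Set V, spreadStep G 2 2 B = B → s ∈ B → x ∈ B → U ⊆ B) := by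
    intro U hU
    exact st16_exists_seedpair hcub hU (hent1 U (st16_unit_nonempty hU))
  choose! sd ex hs1 hs2 hs3 hs4 hs5 using hseedex
  set T : Set V :=
    insert (ex (st16_unitOf G v₀)) ((fun v => sd (st16_unitOf G v)) '' Set.univ) with hTdef
  obtain ⟨N, hNfix⟩ := st16_exists_fix (G := G) 2 2 T
  set B : Set V := (spreadStep G 2 2)^[N] T with hBdef
  have hTB : T ⊆ B := st16_subset_iterate G T N
  have hsdB : ∀ v : V, sd (st16_unitOf G v) ∈ B :=
    fun v => hTB (Set.mem_insert_iff.mpr (Or.inr ⟨v, trivial, rfl⟩))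
  have hcases : ∀ v : V, IsDiamond' G (st16_unitOf G v) ∨ IsTriangle' G (st16_unitOf G v) :=
    st16_unitOf_cases hcub hcf
  have main : ∀ n : ℕ, ∀ v : V, G.dist v₀ v ≤ n → st16_unitOf G v ⊆ B := by
    intro n
    induction n with
    | zero =>
      intro v hv
      have hveq : v₀ = v := hconn.dist_eq_zero_iff.mp (Nat.le_zero.mp hv)
      subst hveq
      exact hs5 (st16_unitOf G v₀) (hcases v₀) B hNfix (hsdB v₀)
        (hTB (Set.mem_insert_iff.mpr (Or.inl rfl)))
    | succ n ih =>
      intro v hv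
      have hUne : (st16_unitOf G v).Nonempty := ⟨v, st16_unitOf_mem hcub hcf v⟩
      have heU : ent (st16_unitOf G v) ∈ st16_unitOf G v := hent1 _ hUne
      by_cases hde : G.dist v₀ (ent (st16_unitOf G v)) ≤ n
      · have h1 := ih _ hde
        rwa [st16_unitOf_eq hcub hcf hK4 heU] at h1
      · have hdle : G.dist v₀ (ent (st16_unitOf G v)) ≤ n + 1 :=
          le_trans (hent2 _ hUne v (st16_unitOf_mem hcub hcf v)) hv
        have hdeq : G.dist v₀ (ent (st16_unitOf G v)) = n + 1 := by omega
        obtain ⟨ℓ, hla, hld⟩ := st16_pred hconn v₀ hdeq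
        have hlU : ℓ ∉ st16_unitOf G v := fun hmem => hde (hld ▸ hent2 _ hUne ℓ hmem)
        have hlB : st16_unitOf G ℓ ⊆ B := by
          apply ih
          omega
        have hlmem : ℓ ∈ B := hlB (st16_unitOf_mem hcub hcf ℓ)
        have hlz : ∃ z : V, G.Adj ℓ z ∧ z ∈ B := by
          have h2 := st16_unitOf_deg hcub hcf ℓ ℓ (st16_unitOf_mem hcub hcf ℓ)
          have h3 : (G.neighborSet ℓ ∩ st16_unitOf G ℓ).Nonempty := by
            apply Set.nonempty_of_ncard_ne_zero
            omega
          obtain ⟨z, hz1, hz2⟩ := h3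
          exact ⟨z, hz1, hlB hz2⟩
        exact hs4 _ (hcases v) B hNfix (hsdB v) ℓ hlmem hlU hla hlz
  have hBuniv : B = Set.univ := by
    apply Set.eq_univ_of_forall
    intro v
    exact main (G.dist v₀ v) v le_rfl (st16_unitOf_mem hcub hcf v)
  have hcount : ((fun v => st16_unitOf G v) '' Set.univ).ncard ≤ S.ncard := by
    have hexS : ∀ U ∈ ((fun v => st16_unitOf G v) '' Set.univ), (S ∩ U).Nonempty := by
      rintro U ⟨v, -, rfl⟩
      exact st16_unit_seed hcub (st16_unitOf_deg hcub hcf v)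
        ⟨v, st16_unitOf_mem hcub hcf v⟩ hperc
    choose! pick hpick using hexS
    apply Set.ncard_le_ncard_of_injOn pick (fun U hU => (hpick U hU).1) ?_ (Set.toFinite S)
    rintro U1 ⟨w1, -, rfl⟩ U2 ⟨w2, -, rfl⟩ heq
    have hz1 : pick ((fun v => st16_unitOf G v) w1) ∈ st16_unitOf G w1 :=
      (hpick _ ⟨w1, trivial, rfl⟩).2
    have hz2 : pick ((fun v => st16_unitOf G v) w2) ∈ st16_unitOf G w2 :=
      (hpick _ ⟨w2, trivial, rfl⟩).2
    rw [heq] at hz1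
    have e1 := st16_unitOf_eq hcub hcf hK4 hz1
    have e2 := st16_unitOf_eq hcub hcf hK4 hz2
    simp only []
    rw [← e1, ← e2]
  have himage : T.ncard ≤ ((fun v => st16_unitOf G v) '' Set.univ).ncard + 1 := by
    have h1 : T.ncard ≤ ((fun v => sd (st16_unitOf G v)) '' Set.univ).ncard + 1 :=
      Set.ncard_insert_le _ _
    have h2 : ((fun v => sd (st16_unitOf G v)) '' Set.univ) =
        sd '' ((fun v => st16_unitOf G v) '' Set.univ) := by
      rw [← Set.image_comp]
      rfl
    have h3 : (sd '' ((fun v => st16_unitOf G v) '' Set.univ)).ncard ≤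
        ((fun v => st16_unitOf G v) '' Set.univ).ncard := Set.ncard_image_le (Set.toFinite _)
    rw [h2] at h1
    omega
  refine ⟨T, ⟨N, ?_⟩, by omega⟩
  rw [← hBdef]
  exact hBuniv

end Main

section Final
variable {V : Type*} [Fintype V] {G : SimpleGraph V}

lemma st16_main_K4 (hconn : G.Connected) (hcub : ∀ v : V, (G.neighborSet v).ncard = 3)
    {v : V} (hv : st16_AllAdj G v) :
    ∃ T : Set V, IsSpreadingSet G 2 2 T ∧ T.ncard ≤ 2 := by
  obtain ⟨a, b, c, hab, hac, hbc, hN⟩ := st16_nbrs hcub v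
  have ha : G.Adj v a := by rw [← SimpleGraph.mem_neighborSet, hN]; simp
  have hb : G.Adj v b := by rw [← SimpleGraph.mem_neighborSet, hN]; simp
  have hc : G.Adj v c := by rw [← SimpleGraph.mem_neighborSet, hN]; simp
  have kab : G.Adj a b := hv a b ha hb hab
  have kac : G.Adj a c := hv a c ha hc hac
  have kbc : G.Adj b c := hv b c hb hc hbc
  have hNa : G.neighborSet a = {v, b, c} := st16_nbr_eq hcub hb.ne hc.ne hbc ha.symm kab kac
  have hNb : G.neighborSet b = {v, a, c} := st16_nbr_eq hcub ha.ne hc.ne hac hb.symm kab.symm kbc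
  have hNc : G.neighborSet c = {v, a, b} := st16_nbr_eq hcub ha.ne hb.ne hab hc.symm kac.symm kbc.symm
  have hclosed : ∀ x ∈ ({v, a, b, c} : Set V), ∀ y, G.Adj x y → y ∈ ({v, a, b, c} : Set V) := by
    intro x hx y hy
    rcases hx with rfl | rfl | rfl | rfl
    · have : y ∈ G.neighborSet x := hy
      rw [hN] at this
      rcases this with rfl | rfl | rfl <;> simp
    · have : y ∈ G.neighborSet x := hy
      rw [hNa] at this
      rcases this with rfl | rfl | rfl <;> simp
    · have : y ∈ G.neighborSet x := hy
      rw [hNb] at this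
      rcases this with rfl | rfl | rfl <;> simp
    · have : y ∈ G.neighborSet x := hy
      rw [hNc] at this
      rcases this with rfl | rfl | rfl <;> simp
  have huniv : ∀ u : V, u ∈ ({v, a, b, c} : Set V) := by
    intro u
    exact st16_walk_closed hclosed (hconn v u).some (by simp)
  have hcert : ∀ w : V, G.Adj w a → w ∉ ({v, a} : Set V) → w ∈ spreadStep G 2 2 {v, a} := by
    intro w hwa hw
    right
    constructor
    · have hsub : ({v, a} : Set V) ⊆ G.neighborSet w ∩ {v, a} := by
        intro t ht
        rcases ht with rfl | rfl
        · refine ⟨?_, by simp⟩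
          have hwm : w ∈ ({t, a, b, c} : Set V) := huniv w
          rcases hwm with rfl | rfl | rfl | rfl
          · exact absurd (by simp : w ∈ ({w, a} : Set V)) hw
          · exact absurd (by simp : w ∈ ({t, w} : Set V)) hw
          · exact hb.symm
          · exact hc.symm
        · exact ⟨hwa, by simp⟩
      calc (2 : ℕ) = ({v, a} : Set V).ncard := (Set.ncard_pair ha.ne).symm
        _ ≤ _ := Set.ncard_le_ncard hsub (Set.toFinite _)
    · refine ⟨a, ⟨hwa, by simp⟩, ?_⟩
      have hsub2 : G.neighborSet a \ {v, a} ⊆ {b, c} := by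
        intro t ⟨ht1, ht2⟩
        rw [hNa] at ht1
        rcases ht1 with rfl | rfl | rfl
        · exact absurd (by simp) ht2
        · simp
        · simp
      have h2 : (G.neighborSet a \ {v, a}).ncard ≤ 2 := by
        calc (G.neighborSet a \ {v, a}).ncard ≤ ({b, c} : Set V).ncard :=
          Set.ncard_le_ncard hsub2 (Set.toFinite _)
        _ ≤ 2 := by rw [Set.ncard_pair hbc]
      exact_mod_cast Nat.cast_le.mpr h2
  refine ⟨{v, a}, ⟨1, ?_⟩, ?_⟩
  · rw [Function.iterate_one]
    apply Set.eq_univ_of_forall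
    intro w
    by_cases hw : w ∈ ({v, a} : Set V)
    · exact Or.inl hw
    · apply hcert w ?_ hw
      have hwm : w ∈ ({v, a, b, c} : Set V) := huniv w
      rcases hwm with rfl | rfl | rfl | rfl
      · exact absurd (by simp : w ∈ ({w, a} : Set V)) hw
      · exact absurd (by simp : w ∈ ({v, w} : Set V)) hw
      · exact kab.symm
      · exact kac.symm
  · rw [Set.ncard_pair ha.ne]

lemma st16_pos (hne : Nonempty V) (G : SimpleGraph V) : 1 ≤ spreadNumber G 2 3 := by
  by_contra h
  push_neg at h
  rw [Nat.lt_one_iff] at h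
  have h0 : (0 : ℕ) ∈ {k | ∃ S : Set V, S.ncard = k ∧ IsSpreadingSet G 2 3 S} := by
    rw [← h]
    exact Nat.sInf_mem (st16_sets_nonempty G 2 3)
  obtain ⟨S, hS0, n, hn⟩ := h0
  have hSe : S = ∅ := (Set.ncard_eq_zero (Set.toFinite S)).mp hS0
  subst hSe
  have hiter : ∀ m : ℕ, (spreadStep G 2 3)^[m] (∅ : Set V) = ∅ := by
    intro m
    induction m with
    | zero => rfl
    | succ m ih =>
      rw [Function.iterate_succ_apply', ih]
      apply Set.eq_empty_iff_forall_notMem.mpr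
      rintro x (hx | hx)
      · exact hx
      · obtain ⟨h2, -⟩ := hx
        rw [Set.inter_empty] at h2
        simp [Set.ncard_empty] at h2
  rw [hiter n] at hn
  exact (Set.univ_nonempty.ne_empty) hn.symm

end Final

theorem stmt16' {V : Type*} [Fintype V] (G : SimpleGraph V)
    (hconn : G.Connected) (hcf : ClawFree G)
    (hcub : ∀ v : V, (G.neighborSet v).ncard = 3) :
    spreadNumber G 2 3 ≤ spreadNumber G 2 2 ∧
    spreadNumber G 2 2 ≤ spreadNumber G 2 3 + 1 := by
  refine ⟨st16_part1 G, ?_⟩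
  obtain ⟨S, hScard0, hSspread⟩ := Nat.sInf_mem (st16_sets_nonempty G 2 3)
  have hScard : S.ncard = spreadNumber G 2 3 := hScard0
  have hperc := st16_spreading_percolates G hSspread
  have h1le : 1 ≤ spreadNumber G 2 3 := st16_pos hconn.nonempty G
  by_cases hk : ∃ v : V, st16_AllAdj G v
  · obtain ⟨v, hv⟩ := hk
    obtain ⟨T, hTs, hTc⟩ := st16_main_K4 hconn hcub hv
    have h2 : spreadNumber G 2 2 ≤ T.ncard := Nat.sInf_le ⟨T, rfl, hTs⟩
    omega
  · push_neg at hk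
    obtain ⟨T, hTs, hTc⟩ := st16_main_nonK4 hconn hcf hcub hk hperc
    have h2 : spreadNumber G 2 2 ≤ T.ncard := Nat.sInf_le ⟨T, rfl, hTs⟩
    calc spreadNumber G 2 2 ≤ T.ncard := h2
      _ ≤ S.ncard + 1 := hTc
      _ = spreadNumber G 2 3 + 1 := by rw [hScard]


theorem stmt16 {V : Type*} [Fintype V] (G : SimpleGraph V)
    (hconn : G.Connected) (hcf : ClawFree G)
    (hcub : ∀ v : V, (G.neighborSet v).ncard = 3) :
    spreadNumber G 2 3 ≤ spreadNumber G 2 2 ∧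
    spreadNumber G 2 2 ≤ spreadNumber G 2 3 + 1 := by
  exact stmt16' G hconn hcf hcub
end

section
/- If G ≠ K_4 is a connected, claw-free, cubic graph with u(G) units in its triangle-diamond partition, then u(G) + 1 ≤ σ_{(2,1)}(G) ≤ u(G) + 2. -/
open SimpleGraph Set

variable {V : Type*}

section SpreadHelpers
set_option maxHeartbeats 1600000
set_option linter.unusedSectionVars false

variable {V : Type*} [Fintype V]

private lemma subset_spreadStep' (G : SimpleGraph V) (p : ℕ) (q : ℕ∞) (B : Set V) :
    B ⊆ spreadStep G p q B := Set.subset_union_left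

private lemma subset_iterate' (G : SimpleGraph V) (p : ℕ) (q : ℕ∞) : ∀ (n : ℕ) (B : Set V),
    B ⊆ (spreadStep G p q)^[n] B := by
  intro n
  induction n with
  | zero => intro B; simp
  | succ n ih =>
    intro B
    rw [Function.iterate_succ_apply]
    exact (subset_spreadStep' G p q B).trans (ih _)

private lemma iterate_le_iterate' (G : SimpleGraph V) (p : ℕ) (q : ℕ∞) {m n : ℕ} (h : m ≤ n)
    (B : Set V) : (spreadStep G p q)^[m] B ⊆ (spreadStep G p q)^[n] B := by
  obtain ⟨k, rfl⟩ := Nat.le.dest h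
  rw [Nat.add_comm, Function.iterate_add_apply]
  exact subset_iterate' G p q k _

private lemma exists_pred' {G : SimpleGraph V} (hconn : G.Connected) {r v : V}
    (h : 0 < G.dist r v) : ∃ t, G.Adj v t ∧ G.dist r t + 1 = G.dist r v := by
  obtain ⟨p, hp⟩ := hconn.exists_walk_length_eq_dist v r
  cases p with
  | nil =>
    rw [SimpleGraph.Walk.length_nil] at hp
    rw [SimpleGraph.dist_comm] at h
    omega
  | @cons _ t _ h' q =>
    refine ⟨t, h', ?_⟩
    have h1 : G.dist r t ≤ q.length := by
      rw [SimpleGraph.dist_comm]; exact SimpleGraph.dist_le q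
    have h2 : G.dist r v ≤ G.dist r t + G.dist t v := hconn.dist_triangle
    have h3 : G.dist t v ≤ 1 := by
      have := SimpleGraph.dist_le (SimpleGraph.Walk.cons h'.symm SimpleGraph.Walk.nil)
      simpa using this
    rw [SimpleGraph.Walk.length_cons] at hp
    have h4 : G.dist v r = G.dist r v := SimpleGraph.dist_comm
    omega

private lemma subset_singleton_of_ncard_le_one {A : Set V} {x : V}
    (h : A.ncard ≤ 1) (hx : x ∈ A) : A ⊆ {x} := by
  intro y hy
  by_contra hne
  simp only [Set.mem_singleton_iff] at hne
  have hs : ({x, y} : Set V) ⊆ A := by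
    intro z hz; rcases hz with rfl | hz
    · exact hx
    · simp only [Set.mem_singleton_iff] at hz; subst hz; exact hy
  have := Set.ncard_le_ncard hs A.toFinite
  rw [Set.ncard_pair (Ne.symm hne)] at this
  omega

private lemma mem_spreadStep_two_one {G : SimpleGraph V} {B : Set V} {w u1 u2 : V}
    (hne : u1 ≠ u2) (h1 : G.Adj w u1) (h2 : G.Adj w u2) (hb1 : u1 ∈ B) (hb2 : u2 ∈ B)
    (hc : (G.neighborSet u1 \ B).ncard ≤ 1) : w ∈ spreadStep G 2 1 B := by
  apply Set.mem_union_right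
  refine ⟨?_, u1, ⟨h1, hb1⟩, ?_⟩
  · have hs : ({u1, u2} : Set V) ⊆ G.neighborSet w ∩ B := by
      intro z hz; rcases hz with rfl | hz
      · exact ⟨h1, hb1⟩
      · simp only [Set.mem_singleton_iff] at hz; subst hz; exact ⟨h2, hb2⟩
    calc (2:ℕ) = ({u1, u2} : Set V).ncard := (Set.ncard_pair hne).symm
      _ ≤ _ := Set.ncard_le_ncard hs (Set.toFinite _)
  · exact_mod_cast hc

private lemma ext_le_one {G : SimpleGraph V} {v : V} (hcub : (G.neighborSet v).ncard = 3)
    {W : Set V} {x y : V} (hxy : x ≠ y) (hx : x ∈ G.neighborSet v ∩ W)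
    (hy : y ∈ G.neighborSet v ∩ W) : (G.neighborSet v \ W).ncard ≤ 1 := by
  have h2 : 2 ≤ (G.neighborSet v ∩ W).ncard := by
    have hs : ({x, y} : Set V) ⊆ G.neighborSet v ∩ W := by
      intro z hz; rcases hz with rfl | hz
      · exact hx
      · simp only [Set.mem_singleton_iff] at hz; subst hz; exact hy
    calc (2:ℕ) = ({x, y} : Set V).ncard := (Set.ncard_pair hxy).symm
      _ ≤ _ := Set.ncard_le_ncard hs (Set.toFinite _)
  have := Set.ncard_inter_add_ncard_diff_eq_ncard (G.neighborSet v) W (Set.toFinite _)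
  omega

private lemma ext_empty {G : SimpleGraph V} {v : V} (hcub : (G.neighborSet v).ncard = 3)
    {W : Set V} {x y z : V} (hxy : x ≠ y) (hxz : x ≠ z) (hyz : y ≠ z)
    (hx : x ∈ G.neighborSet v ∩ W) (hy : y ∈ G.neighborSet v ∩ W)
    (hz : z ∈ G.neighborSet v ∩ W) : G.neighborSet v \ W = ∅ := by
  have h3 : 3 ≤ (G.neighborSet v ∩ W).ncard := by
    have hs : ({x, y, z} : Set V) ⊆ G.neighborSet v ∩ W := by
      intro w hw; rcases hw with rfl | rfl | hw
      · exact hx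
      · exact hy
      · simp only [Set.mem_singleton_iff] at hw; subst hw; exact hz
    have hcard : ({x, y, z} : Set V).ncard = 3 := by
      rw [Set.ncard_insert_of_notMem (by simp [hxy, hxz]) (Set.toFinite _), Set.ncard_pair hyz]
    calc (3:ℕ) = ({x, y, z} : Set V).ncard := hcard.symm
      _ ≤ _ := Set.ncard_le_ncard hs (Set.toFinite _)
  have hsum := Set.ncard_inter_add_ncard_diff_eq_ncard (G.neighborSet v) W (Set.toFinite _)
  have h0 : (G.neighborSet v \ W).ncard = 0 := by omega
  rwa [Set.ncard_eq_zero (Set.toFinite _)] at h0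

private lemma triangle_cases {G : SimpleGraph V} {W : Set V} (h : IsTriangle G W) {v : V} (hv : v ∈ W) :
    ∃ p q : V, v ≠ p ∧ v ≠ q ∧ p ≠ q ∧ G.Adj v p ∧ G.Adj v q ∧ G.Adj p q ∧ W = {v, p, q} := by
  obtain ⟨a, b, c, hab, hac, hbc, h1, h2, h3, rfl⟩ := h
  rcases hv with rfl | rfl | hv
  · exact ⟨b, c, hab, hac, hbc, h1, h2, h3, rfl⟩
  · exact ⟨a, c, hab.symm, hbc, hac, h1.symm, h3, h2, by ext x; simp; tauto⟩
  · simp only [Set.mem_singleton_iff] at hv; subst hv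
    exact ⟨a, b, hac.symm, hbc.symm, hab, h2.symm, h3.symm, h1, by ext x; simp; tauto⟩

private lemma diamond_cases {G : SimpleGraph V}
    (hcub : ∀ v : V, (G.neighborSet v).ncard = 3)
    {W : Set V} (h : IsDiamond G W) {v t : V} (hv : v ∈ W) (ht : G.Adj v t) (htW : t ∉ W) :
    ∃ x p q : V, v ≠ x ∧ v ≠ p ∧ v ≠ q ∧ x ≠ p ∧ x ≠ q ∧ p ≠ q ∧
      ¬ G.Adj v x ∧ G.Adj v p ∧ G.Adj v q ∧ G.Adj x p ∧ G.Adj x q ∧ G.Adj p q ∧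
      W = {v, x, p, q} := by
  obtain ⟨a, b, c, d, hab, hac, had, hbc, hbd, hcd, hnadj, h1, h2, h3, h4, h5, rfl⟩ := h
  have hdeg : ∀ w : V, (∃ x y z : V, x ≠ y ∧ x ≠ z ∧ y ≠ z ∧
      G.Adj w x ∧ G.Adj w y ∧ G.Adj w z ∧ x ≠ t ∧ y ≠ t ∧ z ≠ t) → ¬ G.Adj w t := by
    rintro w ⟨x, y, z, hxy, hxz, hyz, hx, hy, hz, hxt, hyt, hzt⟩ hwt
    have hs : ({x, y, z, t} : Set V) ⊆ G.neighborSet w := by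
      intro u hu
      rcases hu with rfl | rfl | rfl | hu
      · exact hx
      · exact hy
      · exact hz
      · simp only [Set.mem_singleton_iff] at hu; subst hu; exact hwt
    have hc4 : ({x, y, z, t} : Set V).ncard = 4 := by
      rw [Set.ncard_insert_of_notMem (by simp [hxy, hxz, hxt]) (Set.toFinite _),
        Set.ncard_insert_of_notMem (by simp [hyz, hyt]) (Set.toFinite _),
        Set.ncard_pair hzt]
    have := Set.ncard_le_ncard hs (Set.toFinite _)
    rw [hc4, hcub w] at this
    omega
  rcases hv with rfl | rfl | rfl | hv
  · exact ⟨b, c, d, hab, hac, had, hbc, hbd, hcd, hnadj, h1, h2, h3, h4, h5, rfl⟩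
  · exact ⟨a, c, d, hab.symm, hbc, hbd, hac, had, hcd, fun hx => hnadj hx.symm,
      h3, h4, h1, h2, h5, by ext x; simp; tauto⟩
  · exfalso
    refine hdeg v ⟨a, b, d, hab, had, hbd, h1.symm, h3.symm, h5, ?_, ?_, ?_⟩ ht <;>
      (rintro rfl; apply htW; simp)
  · simp only [Set.mem_singleton_iff] at hv; subst hv
    exfalso
    refine hdeg v ⟨a, b, c, hab, hac, hbc, h2.symm, h4.symm, h5.symm, ?_, ?_, ?_⟩ ht <;>
      (rintro rfl; apply htW; simp)

private lemma fill_unit {G : SimpleGraph V}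
    (hcub : ∀ v : V, (G.neighborSet v).ncard = 3)
    {W B : Set V} (hU : IsTriangle G W ∨ IsDiamond G W)
    {e s t : V} (he : e ∈ W) (hsW : s ∈ W) (hse : G.Adj e s)
    (htW : t ∉ W) (hte : G.Adj e t) (hsB : s ∈ B) (htB : t ∈ B)
    (htw : G.neighborSet t \ B ⊆ {e}) :
    W ⊆ (spreadStep G 2 1)^[3] B := by
  set f := spreadStep G 2 1 with hf
  have hstep : ∀ C : Set V, C ⊆ f C := fun C => Set.subset_union_left
  have h3eq : f^[3] B = f (f (f B)) := by
    rw [show (3:ℕ) = 1+1+1 from rfl, Function.iterate_add_apply, Function.iterate_add_apply]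
    simp
  rw [h3eq]
  have hts : t ≠ s := fun h => htW (h ▸ hsW)
  have heB1 : e ∈ f B :=
    mem_spreadStep_two_one hts hte hse htB hsB
      (le_trans (Set.ncard_le_ncard htw (Set.toFinite _)) (by simp))
  rcases hU with hT | hD
  · -- triangle case
    obtain ⟨p, q, hep, heq, hpq, hEp, hEq, hPQ, hWeq⟩ := triangle_cases hT he
    have main : ∀ p q : V, e ≠ p → e ≠ q → p ≠ q → G.Adj e p → G.Adj e q → G.Adj p q →
        W = {e, p, q} → s = p → W ⊆ f (f (f B)) := by
      intro p q hep heq hpq hEp hEq hPQ hWeq hs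
      subst hs
      have hneE : G.neighborSet e ⊆ {s, q, t} := by
        intro x hx
        by_cases hxW : x ∈ W
        · have hxe : x ≠ e := fun h => by
            rw [h] at hx; exact G.irrefl hx
          rw [hWeq] at hxW
          rcases hxW with rfl | rfl | hxW
          · exact absurd rfl hxe
          · exact Set.mem_insert _ _
          · simp only [Set.mem_singleton_iff] at hxW; subst hxW; simp
        · have h1 : (G.neighborSet e \ W).ncard ≤ 1 :=
            ext_le_one (hcub e) hpq ⟨hEp, hWeq ▸ (by simp)⟩ ⟨hEq, hWeq ▸ (by simp)⟩
          have := subset_singleton_of_ncard_le_one h1 ⟨hte, htW⟩ (Set.mem_diff_of_mem hx hxW)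
          simp only [Set.mem_singleton_iff] at this; subst this; simp
      have hqB2 : q ∈ f (f B) := by
        refine mem_spreadStep_two_one hep hEq.symm hPQ.symm heB1 (hstep B hsB) ?_
        have hsub : G.neighborSet e \ f B ⊆ {q} := by
          intro x hx
          have := hneE hx.1
          rcases this with rfl | rfl | h
          · exact absurd (hstep B hsB) hx.2
          · rfl
          · simp only [Set.mem_singleton_iff] at h; subst h
            exact absurd (hstep B htB) hx.2
        exact le_trans (Set.ncard_le_ncard hsub (Set.toFinite _)) (by simp)
      rw [hWeq]
      intro x hx
      rcases hx with rfl | rfl | hx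
      · exact hstep _ (hstep _ heB1)
      · exact hstep _ (hstep _ (hstep _ hsB))
      · simp only [Set.mem_singleton_iff] at hx; subst hx
        exact hstep _ hqB2
    have hsW' : s ∈ ({e, p, q} : Set V) := hWeq ▸ hsW
    rcases hsW' with hs | hs | hs
    · exact absurd hs hse.ne'
    · exact main p q hep heq hpq hEp hEq hPQ hWeq hs
    · simp only [Set.mem_singleton_iff] at hs
      exact main q p heq hep hpq.symm hEq hEp hPQ.symm (by rw [hWeq]; ext x; simp; tauto) hs
  · -- diamond case
    obtain ⟨b', p, q, heb, hep, heq, hbp, hbq, hpq, hnadj, hEp, hEq, hBp, hBq, hPQ, hWeq⟩ :=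
      diamond_cases hcub hD he hte htW
    have main : ∀ p q : V, e ≠ p → e ≠ q → b' ≠ p → b' ≠ q → p ≠ q →
        G.Adj e p → G.Adj e q → G.Adj b' p → G.Adj b' q → G.Adj p q →
        W = {e, b', p, q} → s = p → W ⊆ f (f (f B)) := by
      intro p q hep heq hbp hbq hpq hEp hEq hBp hBq hPQ hWeq hs
      subst hs
      -- neighborhood of e is {s, q, t}
      have hneE : G.neighborSet e ⊆ {s, q, t} := by
        intro x hx
        by_cases hxW : x ∈ W
        · have hxe : x ≠ e := fun h => by rw [h] at hx; exact G.irrefl hx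
          have hxb : x ≠ b' := fun h => by rw [h] at hx; exact hnadj hx
          rw [hWeq] at hxW
          rcases hxW with rfl | rfl | rfl | hxW
          · exact absurd rfl hxe
          · exact absurd rfl hxb
          · exact Set.mem_insert _ _
          · simp only [Set.mem_singleton_iff] at hxW; subst hxW; simp
        · have h1 : (G.neighborSet e \ W).ncard ≤ 1 :=
            ext_le_one (hcub e) hpq ⟨hEp, hWeq ▸ (by simp)⟩ ⟨hEq, hWeq ▸ (by simp)⟩
          have := subset_singleton_of_ncard_le_one h1 ⟨hte, htW⟩ ⟨hx, hxW⟩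
          simp only [Set.mem_singleton_iff] at this; subst this; simp
      -- q becomes blue at step 2
      have hqB2 : q ∈ f (f B) := by
        refine mem_spreadStep_two_one hep hEq.symm hPQ.symm heB1 (hstep B hsB) ?_
        have hsub : G.neighborSet e \ f B ⊆ {q} := by
          intro x hx
          have := hneE hx.1
          rcases this with rfl | rfl | h
          · exact absurd (hstep B hsB) hx.2
          · rfl
          · simp only [Set.mem_singleton_iff] at h; subst h
            exact absurd (hstep B htB) hx.2
        exact le_trans (Set.ncard_le_ncard hsub (Set.toFinite _)) (by simp)
      -- neighborhood of q is {e, b', s}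
      have hneQ : G.neighborSet q ⊆ {e, b', s} := by
        have hempty : G.neighborSet q \ W = ∅ :=
          ext_empty (hcub q) heb hep hbp
            ⟨hEq.symm, hWeq ▸ (by simp)⟩ ⟨hBq.symm, hWeq ▸ (by simp)⟩
            ⟨hPQ.symm, hWeq ▸ (by simp)⟩
        intro x hx
        have hxW : x ∈ W := by
          by_contra hxW
          exact (Set.notMem_empty x) (hempty ▸ (⟨hx, hxW⟩ : x ∈ G.neighborSet q \ W))
        have hxq : x ≠ q := fun h => by rw [h] at hx; exact G.irrefl hx
        rw [hWeq] at hxW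
        rcases hxW with rfl | rfl | rfl | hxW
        · exact Set.mem_insert _ _
        · simp
        · simp
        · simp only [Set.mem_singleton_iff] at hxW; exact absurd hxW hxq
      -- b' becomes blue at step 3
      have hbB3 : b' ∈ f (f (f B)) := by
        refine mem_spreadStep_two_one hpq.symm hBq hBp hqB2
          (hstep _ (hstep _ hsB)) ?_
        have hsub : G.neighborSet q \ f (f B) ⊆ {b'} := by
          intro x hx
          have := hneQ hx.1
          rcases this with rfl | rfl | h
          · exact absurd (hstep _ heB1) hx.2
          · rfl
          · simp only [Set.mem_singleton_iff] at h; subst h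
            exact absurd (hstep _ (hstep _ hsB)) hx.2
        exact le_trans (Set.ncard_le_ncard hsub (Set.toFinite _)) (by simp)
      rw [hWeq]
      intro x hx
      rcases hx with rfl | rfl | rfl | hx
      · exact hstep _ (hstep _ heB1)
      · exact hbB3
      · exact hstep _ (hstep _ (hstep _ hsB))
      · simp only [Set.mem_singleton_iff] at hx; subst hx
        exact hstep _ hqB2
    have hsW' : s ∈ ({e, b', p, q} : Set V) := hWeq ▸ hsW
    rcases hsW' with hs | hs | hs | hs
    · exact absurd hs hse.ne'
    · exact absurd (hs ▸ hse) hnadj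
    · exact main p q hep heq hbp hbq hpq hEp hEq hBp hBq hPQ hWeq hs
    · simp only [Set.mem_singleton_iff] at hs
      exact main q p heq hep hbq hbp hpq.symm hEq hEp hBq hBp hPQ.symm
        (by rw [hWeq]; ext x; simp; tauto) hs

private lemma fill_root {G : SimpleGraph V}
    (hcub : ∀ v : V, (G.neighborSet v).ncard = 3)
    {W : Set V} (hU : IsTriangle G W ∨ IsDiamond G W) :
    ∃ B₀ : Set V, B₀ ⊆ W ∧ B₀.ncard ≤ 3 ∧ ∀ B : Set V, B₀ ⊆ B → W ⊆ spreadStep G 2 1 B := by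
  rcases hU with hT | hD
  · obtain ⟨a, b, c, hab, hac, hbc, h1, h2, h3, rfl⟩ := hT
    refine ⟨{a, b, c}, le_refl _, ?_, fun B hB => hB.trans Set.subset_union_left⟩
    calc ({a, b, c} : Set V).ncard ≤ ({b, c} : Set V).ncard + 1 := Set.ncard_insert_le _ _
      _ ≤ (({c} : Set V).ncard + 1) + 1 := by
        have := Set.ncard_insert_le b ({c} : Set V); omega
      _ = 3 := by rw [Set.ncard_singleton]
  · obtain ⟨a, b, c, d, hab, hac, had, hbc, hbd, hcd, hnadj, h1, h2, h3, h4, h5, rfl⟩ := hD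
    refine ⟨{b, c, d}, ?_, ?_, ?_⟩
    · intro x hx; rcases hx with rfl | rfl | hx
      · simp
      · simp
      · simp only [Set.mem_singleton_iff] at hx; subst hx; simp
    · calc ({b, c, d} : Set V).ncard ≤ ({c, d} : Set V).ncard + 1 := Set.ncard_insert_le _ _
        _ ≤ (({d} : Set V).ncard + 1) + 1 := by
          have := Set.ncard_insert_le c ({d} : Set V); omega
        _ = 3 := by rw [Set.ncard_singleton]
    · intro B hB
      have hbB : b ∈ B := hB (by simp)
      have hcB : c ∈ B := hB (by simp)
      have hdB : d ∈ B := hB (by simp)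
      have hneC : G.neighborSet c ⊆ {a, b, d} := by
        have hempty : G.neighborSet c \ ({a, b, c, d} : Set V) = ∅ :=
          ext_empty (hcub c) hab had hbd ⟨h1.symm, by simp⟩ ⟨h3.symm, by simp⟩
            ⟨h5, by simp⟩
        intro x hx
        have hxW : x ∈ ({a, b, c, d} : Set V) := by
          by_contra hxW
          exact (Set.notMem_empty x) (hempty ▸ (⟨hx, hxW⟩ : x ∈ G.neighborSet c \ _))
        have hxc : x ≠ c := fun h => by rw [h] at hx; exact G.irrefl hx
        rcases hxW with rfl | rfl | rfl | hxW
        · simp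
        · simp
        · exact absurd rfl hxc
        · simp only [Set.mem_singleton_iff] at hxW; subst hxW; simp
      intro x hx
      rcases hx with rfl | rfl | rfl | hx
      · refine mem_spreadStep_two_one hcd h1 h2 hcB hdB ?_
        have hsub : G.neighborSet c \ B ⊆ {x} := by
          intro y hy
          have := hneC hy.1
          rcases this with rfl | rfl | h
          · rfl
          · exact absurd hbB hy.2
          · simp only [Set.mem_singleton_iff] at h; subst h
            exact absurd hdB hy.2
        exact le_trans (Set.ncard_le_ncard hsub (Set.toFinite _)) (by simp)
      · exact Set.subset_union_left hbB
      · exact Set.subset_union_left hcB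
      · simp only [Set.mem_singleton_iff] at hx; subst hx
        exact Set.subset_union_left hdB

end SpreadHelpers

theorem stmt17 {V : Type*} [Fintype V] (G : SimpleGraph V)
    (hconn : G.Connected) (hcf : ClawFree G)
    (hcub : ∀ v : V, (G.neighborSet v).ncard = 3)
    (hK4 : ¬ Nonempty (G ≃g (⊤ : SimpleGraph (Fin 4))))
    (P : Set (Set V)) (hP : IsTDPartition G P) :
    P.ncard + 1 ≤ spreadNumber G 2 1 ∧ spreadNumber G 2 1 ≤ P.ncard + 2 := by
  classical
  obtain ⟨hPunits, hPuniq⟩ := hP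
  haveI : Nonempty V := hconn.nonempty
  have hmemP : ∀ v : V, ∃ W, W ∈ P ∧ v ∈ W := fun v => (hPuniq v).exists
  have huniq : ∀ {v : V} {W W' : Set V}, W ∈ P → W' ∈ P → v ∈ W → v ∈ W' → W = W' := by
    intro v W W' h1 h2 h3 h4
    obtain ⟨U, _, hU⟩ := hPuniq v
    rw [hU W ⟨h1, h3⟩, hU W' ⟨h2, h4⟩]
  have hWne : ∀ W ∈ P, W.Nonempty := by
    intro W hW
    rcases hPunits W hW with ⟨a, _, _, _, _, _, _, _, _, rfl⟩ |
      ⟨a, _, _, _, _, _, _, _, _, _, _, _, _, _, _, _, rfl⟩ <;> exact ⟨a, by simp⟩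
  have hinn : ∀ W, W ∈ P → ∀ v, v ∈ W →
      ∃ x y, x ≠ y ∧ x ∈ G.neighborSet v ∩ W ∧ y ∈ G.neighborSet v ∩ W := by
    intro W hW v hv
    rcases hPunits W hW with hT | hD
    · obtain ⟨p, q, _, _, hpq, hEp, hEq, _, hWeq⟩ := triangle_cases hT hv
      exact ⟨p, q, hpq, ⟨hEp, hWeq ▸ (by simp)⟩, ⟨hEq, hWeq ▸ (by simp)⟩⟩
    · obtain ⟨a, b, c, d, hab, hac, had, hbc, hbd, hcd, hnadj, h1, h2, h3, h4, h5, rfl⟩ := hD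
      rcases hv with rfl | rfl | rfl | hv
      · exact ⟨c, d, hcd, ⟨h1, by simp⟩, ⟨h2, by simp⟩⟩
      · exact ⟨c, d, hcd, ⟨h3, by simp⟩, ⟨h4, by simp⟩⟩
      · exact ⟨a, b, hab, ⟨h1.symm, by simp⟩, ⟨h3.symm, by simp⟩⟩
      · simp only [Set.mem_singleton_iff] at hv; subst hv
        exact ⟨a, b, hab, ⟨h2.symm, by simp⟩, ⟨h4.symm, by simp⟩⟩
  -- ===================== lower bound =====================
  have hlow : ∀ S : Set V, IsSpreadingSet G 2 1 S → P.ncard + 1 ≤ S.ncard := by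
    intro S hS
    obtain ⟨n, hn⟩ := hS
    have hmeet : ∀ W ∈ P, (S ∩ W).Nonempty := by
      intro W hW
      by_contra hcon
      rw [Set.not_nonempty_iff_eq_empty] at hcon
      have hinv : ∀ m, ((spreadStep G 2 1)^[m] S) ∩ W = ∅ := by
        intro m
        induction m with
        | zero => simpa using hcon
        | succ m ih =>
          rw [Function.iterate_succ_apply']
          apply Set.eq_empty_iff_forall_notMem.mpr
          rintro x ⟨hx, hxW⟩
          rcases hx with hx | ⟨h2, _⟩
          · exact Set.eq_empty_iff_forall_notMem.mp ih x ⟨hx, hxW⟩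
          · have hsub : G.neighborSet x ∩ ((spreadStep G 2 1)^[m] S) ⊆
                G.neighborSet x \ W := by
              rintro y ⟨hy1, hy2⟩
              exact ⟨hy1, fun hyW => Set.eq_empty_iff_forall_notMem.mp ih y ⟨hy2, hyW⟩⟩
            obtain ⟨p, q, hpq, hp, hq⟩ := hinn W hW x hxW
            have h1 : (G.neighborSet x \ W).ncard ≤ 1 := ext_le_one (hcub x) hpq hp hq
            have := Set.ncard_le_ncard hsub (Set.toFinite _)
            omega
      have h0 := hinv n
      rw [hn, Set.univ_inter] at h0
      exact absurd h0 (hWne W hW).ne_empty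
    by_cases hone : ∀ W ∈ P, (S ∩ W).Subsingleton
    · exfalso
      have hstuck : spreadStep G 2 1 S = S := by
        apply Set.Subset.antisymm _ Set.subset_union_left
        rintro w (hw | ⟨h2, u, ⟨huN, huS⟩, hle⟩)
        · exact hw
        · exfalso
          obtain ⟨Wu, hWuP, hWu⟩ := hmemP u
          obtain ⟨x, y, hxy, hx, hy⟩ := hinn Wu hWuP u hWu
          have hnotS : ∀ z, z ∈ G.neighborSet u ∩ Wu → z ∉ S := by
            rintro z ⟨hz1, hz2⟩ hzS
            have hzu : z ≠ u := fun h => G.irrefl (h ▸ hz1)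
            exact hzu (hone Wu hWuP ⟨hzS, hz2⟩ ⟨huS, hWu⟩)
          have hsub : ({x, y} : Set V) ⊆ G.neighborSet u \ S := by
            intro z hz
            rcases hz with rfl | hz
            · exact ⟨hx.1, hnotS z hx⟩
            · simp only [Set.mem_singleton_iff] at hz; subst hz
              exact ⟨hy.1, hnotS z hy⟩
          have h2' := Set.ncard_le_ncard hsub (Set.toFinite _)
          rw [Set.ncard_pair hxy] at h2'
          have hle' : (G.neighborSet u \ S).ncard ≤ 1 := by exact_mod_cast hle
          omega
      have hiter : ∀ m, (spreadStep G 2 1)^[m] S = S := by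
        intro m
        induction m with
        | zero => rfl
        | succ m ih => rw [Function.iterate_succ_apply', ih, hstuck]
      have hSuniv : S = Set.univ := by rw [← hiter n, hn]
      obtain ⟨W, hW, hvW⟩ := hmemP (Classical.arbitrary V)
      obtain ⟨x, y, hxy, ⟨_, hxW⟩, ⟨_, hyW⟩⟩ := hinn W hW _ hvW
      exact hxy (hone W hW ⟨by rw [hSuniv]; trivial, hxW⟩ ⟨by rw [hSuniv]; trivial, hyW⟩)
    · push_neg at hone
      obtain ⟨W₁, hW₁P, hns⟩ := hone
      obtain ⟨x, hxmem, y, hymem, hxy⟩ := hns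
      choose! rep hrepmem using fun W (hW : W ∈ P) => hmeet W hW
      have hy' : ∃ y', y' ∈ S ∩ W₁ ∧ y' ≠ rep W₁ := by
        by_cases hx1 : x = rep W₁
        · exact ⟨y, hymem, fun h => hxy (by rw [hx1, ← h])⟩
        · exact ⟨x, hxmem, hx1⟩
      obtain ⟨y', hy'mem, hy'ne⟩ := hy'
      have hinj : Set.InjOn rep P := by
        intro A hA B hB hAB
        exact huniq hA hB (hrepmem A hA).2 (hAB ▸ (hrepmem B hB).2)
      have himg : insert y' (rep '' P) ⊆ S := by
        rintro z (rfl | ⟨A, hA, rfl⟩)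
        · exact hy'mem.1
        · exact (hrepmem A hA).1
      have hnotin : y' ∉ rep '' P := by
        rintro ⟨A, hA, hAy⟩
        have hAW : A = W₁ := huniq hA hW₁P (hAy ▸ (hrepmem A hA).2) hy'mem.2
        exact hy'ne (by rw [← hAy, hAW])
      have hcard : (insert y' (rep '' P)).ncard = P.ncard + 1 := by
        rw [Set.ncard_insert_of_notMem hnotin (Set.toFinite _),
          Set.ncard_image_of_injOn hinj]
      calc P.ncard + 1 = (insert y' (rep '' P)).ncard := hcard.symm
        _ ≤ S.ncard := Set.ncard_le_ncard himg (Set.toFinite _)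
  have hlow' : P.ncard + 1 ≤ spreadNumber G 2 1 := by
    have hSetne : {k | ∃ S : Set V, S.ncard = k ∧ IsSpreadingSet G 2 1 S}.Nonempty :=
      ⟨(Set.univ : Set V).ncard, Set.univ, rfl, 0, rfl⟩
    obtain ⟨S, hScard, hSsp⟩ := Nat.sInf_mem hSetne
    have h := hlow S hSsp
    rw [hScard] at h
    exact h
  -- ===================== upper bound =====================
  set r := Classical.arbitrary V with hrdef
  obtain ⟨W₀, hW₀P, hrW₀⟩ := hmemP r
  have hE : ∀ W, W ∈ P → ∃ e, e ∈ W ∧ ∀ w ∈ W, G.dist r e ≤ G.dist r w := by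
    intro W hW
    obtain ⟨e, he, hmin⟩ := Set.exists_min_image W (G.dist r) (Set.toFinite W) (hWne W hW)
    exact ⟨e, he, hmin⟩
  choose! ef hefmem hefmin using hE
  have hSf : ∀ W, W ∈ P → ∃ sw, sw ∈ W ∧ G.Adj (ef W) sw := by
    intro W hW
    obtain ⟨x, _, _, ⟨hx1, hx2⟩, _⟩ := hinn W hW (ef W) (hefmem W hW)
    exact ⟨x, hx2, hx1⟩
  choose! sf hsfmem hsfadj using hSf
  obtain ⟨B₀, hB₀W, hB₀c, hB₀fill⟩ := fill_root hcub (hPunits W₀ hW₀P)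
  set S := B₀ ∪ sf '' (P \ {W₀}) with hSdef
  have hkey : ∀ k : ℕ, ∀ W, W ∈ P → G.dist r (ef W) ≤ k →
      ∃ n, W ⊆ (spreadStep G 2 1)^[n] S := by
    intro k
    induction k with
    | zero =>
      intro W hW hd
      have h0 : G.dist r (ef W) = 0 := Nat.le_zero.mp hd
      have hre : r = ef W := hconn.dist_eq_zero_iff.mp h0
      have hWW0 : W = W₀ := huniq hW hW₀P (hre ▸ hefmem W hW) hrW₀
      refine ⟨1, ?_⟩
      rw [Function.iterate_one, hWW0]
      exact hB₀fill S Set.subset_union_left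
    | succ k ih =>
      intro W hW hd
      by_cases hdk : G.dist r (ef W) ≤ k
      · exact ih W hW hdk
      · have hdeq : G.dist r (ef W) = k + 1 := le_antisymm hd (not_le.mp hdk)
        have hpos : 0 < G.dist r (ef W) := by omega
        obtain ⟨t, hadj, hdt⟩ := exists_pred' hconn hpos
        have hdtk : G.dist r t = k := by omega
        have htW : t ∉ W := fun htWW => by
          have := hefmin W hW t htWW
          omega
        obtain ⟨W', hW'P, htW'⟩ := hmemP t
        have hWW' : W ≠ W' := fun h => htW (h ▸ htW')
        have hd' : G.dist r (ef W') ≤ k := le_trans (hefmin W' hW'P t htW') (le_of_eq hdtk)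
        obtain ⟨n', hn'⟩ := ih W' hW'P hd'
        have hrnW : r ∉ W := fun hrW => by
          have := hefmin W hW r hrW
          rw [SimpleGraph.dist_self] at this
          omega
        have hWne0 : W ≠ W₀ := fun h => hrnW (h ▸ hrW₀)
        have hsfS : sf W ∈ S := Set.mem_union_right _ ⟨W, ⟨hW, by simp [hWne0]⟩, rfl⟩
        have hsfB : sf W ∈ (spreadStep G 2 1)^[n'] S := subset_iterate' G 2 1 n' S hsfS
        have htB : t ∈ (spreadStep G 2 1)^[n'] S := hn' htW'
        have hefnW' : ef W ∉ W' := fun h => hWW' (huniq hW hW'P (hefmem W hW) h)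
        have htwsub : G.neighborSet t \ ((spreadStep G 2 1)^[n'] S) ⊆ {ef W} := by
          have h1 : (G.neighborSet t \ W').ncard ≤ 1 := by
            obtain ⟨p, q, hpq, hp, hq⟩ := hinn W' hW'P t htW'
            exact ext_le_one (hcub t) hpq hp hq
          have h2 := subset_singleton_of_ncard_le_one h1 ⟨hadj.symm, hefnW'⟩
          intro z hz
          exact h2 ⟨hz.1, fun hzW' => hz.2 (hn' hzW')⟩
        have hfill := fill_unit hcub (hPunits W hW) (hefmem W hW) (hsfmem W hW)
          (hsfadj W hW) htW hadj hsfB htB htwsub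
        refine ⟨3 + n', ?_⟩
        rw [Function.iterate_add_apply]
        exact hfill
  have hall : ∀ v : V, ∃ n, v ∈ (spreadStep G 2 1)^[n] S := by
    intro v
    obtain ⟨W, hW, hvW⟩ := hmemP v
    obtain ⟨n, hn⟩ := hkey (G.dist r (ef W)) W hW le_rfl
    exact ⟨n, hn hvW⟩
  choose nn hnn using hall
  have hsp : IsSpreadingSet G 2 1 S := by
    refine ⟨Finset.univ.sup nn, Set.eq_univ_of_forall fun v => ?_⟩
    exact iterate_le_iterate' G 2 1 (Finset.le_sup (Finset.mem_univ v)) S (hnn v)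
  have hsize : S.ncard ≤ P.ncard + 2 := by
    have hPpos : 0 < P.ncard := (Set.ncard_pos (Set.toFinite P)).mpr ⟨W₀, hW₀P⟩
    have himle : (sf '' (P \ {W₀})).ncard ≤ (P \ {W₀}).ncard :=
      Set.ncard_image_le (Set.toFinite _)
    have hdiff : (P \ {W₀}).ncard = P.ncard - 1 :=
      Set.ncard_diff_singleton_of_mem hW₀P
    have hun : S.ncard ≤ B₀.ncard + (sf '' (P \ {W₀})).ncard := by
      rw [hSdef]
      exact Set.ncard_union_le _ _
    omega
  have hup : spreadNumber G 2 1 ≤ P.ncard + 2 :=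
    le_trans (Nat.sInf_le ⟨S, rfl, hsp⟩) hsize
  exact ⟨hlow', hup⟩
end
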